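/- In the setting of the previous block-diagonal Hamiltonian H_N = Σ_{j∈ℤ/N} P_{j,j+1}, we have dim ker H_N = Σ_{(α^1,...,α^N) ∈ C_N} Π_{j=1}^N dim ker Q_{α_r^j, α_l^{j+1}}, where C_N is the set of ordered closed walks of length N in the directed graph G on vertex set V having an edge α → β whenever ker Q_{α_r, β_l} ≠ 0. -/

import Mathlib

open Matrix

variable {V : Type*} [DecidableEq V]

/-- transport along an equality of vertices, left dimensions. -/
def castL (dl : V → ℕ) {α β : V} (h : α = β) (i : Fin (dl β)) : Fin (dl α) :=
  cast (by rw [h]) i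

/-- transport along an equality of vertices, right dimensions. -/
def castR (dr : V → ℕ) {α β : V} (h : α = β) (i : Fin (dr β)) : Fin (dr α) :=
  cast (by rw [h]) i

/-- the single-site index set, realizing `ℂ^d ≅ ⊕_{α ∈ V} H_{α_l} ⊗ H_{α_r}`
where `dim H_{α_l} = dl α` and `dim H_{α_r} = dr α`. -/
def Site (V : Type*) (dl dr : V → ℕ) : Type _ := Σ α : V, Fin (dl α) × Fin (dr α)

variable [Fintype V]

instance (dl dr : V → ℕ) : Fintype (Site V dl dr) := by unfold Site; infer_instance
instance (dl dr : V → ℕ) : DecidableEq (Site V dl dr) := by unfold Site; infer_instance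

/-- the local term `P_{j,j+1}` of the block-diagonal Hamiltonian on the periodic chain
of `N` qudits: it preserves the decomposition of each site, acts as the identity on all
sites other than `j, j+1` and on the factors `H_{α_l}` of site `j` and `H_{β_r}` of site
`j+1`, and acts as `Q α β` on `H_{α_r} ⊗ H_{β_l}` (for the blocks `α` at `j`, `β` at
`j+1`). -/
noncomputable def Pblock (V : Type*) [Fintype V] [DecidableEq V] (dl dr : V → ℕ)
    (Q : ∀ α β : V, Matrix (Fin (dr α) × Fin (dl β)) (Fin (dr α) × Fin (dl β)) ℂ)
    (N : ℕ) [NeZero N] (j : ZMod N) :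
    Matrix (ZMod N → Site V dl dr) (ZMod N → Site V dl dr) ℂ :=
  Matrix.of fun x y =>
    (if ∀ i, i ≠ j → i ≠ j + 1 → x i = y i then (1 : ℂ) else 0) *
    (if h : (x j).1 = (y j).1 ∧ (x (j + 1)).1 = (y (j + 1)).1 then
      (if (x j).2.1 = castL dl h.1 (y j).2.1 ∧
          (x (j + 1)).2.2 = castR dr h.2 (y (j + 1)).2.2 then
        Q (x j).1 (x (j + 1)).1 ((x j).2.2, (x (j + 1)).2.1)
          (castR dr h.1 (y j).2.2, castL dl h.2 (y (j + 1)).2.1)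
      else 0)
    else 0)

/-- the block-diagonal Hamiltonian `H_N = Σ_{j ∈ ℤ/N} P_{j,j+1}`. -/
noncomputable def Hblock (V : Type*) [Fintype V] [DecidableEq V] (dl dr : V → ℕ)
    (Q : ∀ α β : V, Matrix (Fin (dr α) × Fin (dl β)) (Fin (dr α) × Fin (dl β)) ℂ)
    (N : ℕ) [NeZero N] :
    Matrix (ZMod N → Site V dl dr) (ZMod N → Site V dl dr) ℂ :=
  ∑ j, Pblock V dl dr Q N j

/-- the elementary product vector `⊗_j f_j` lying in the summand of `((ℂ^d)^{⊗N}`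
labelled by the block configuration `a : ℤ/N → V`, where
`f j ∈ H_{(a j)_r} ⊗ H_{(a (j+1))_l}`. -/
noncomputable def prodVec (V : Type*) [DecidableEq V] (dl dr : V → ℕ) (N : ℕ) [NeZero N]
    (a : ZMod N → V)
    (f : ∀ j : ZMod N, Fin (dr (a j)) × Fin (dl (a (j + 1))) → ℂ) :
    (ZMod N → Site V dl dr) → ℂ :=
  fun x =>
    if h : ∀ j, (x j).1 = a j then
      ∏ j, f j (castR dr (h j).symm (x j).2.2, castL dl (h (j + 1)).symm (x (j + 1)).2.1)
    else 0


set_option linter.unusedSectionVars false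

namespace Stm14

variable {ι : Type*} [Fintype ι] [DecidableEq ι] {κ : ι → Type*}
  [∀ i, Fintype (κ i)] [∀ i, DecidableEq (κ i)]

/-- Kronecker-type product of a family of square matrices, acting on functions on a Pi type. -/
noncomputable def tens (M : ∀ i, Matrix (κ i) (κ i) ℂ) :
    Matrix (∀ i, κ i) (∀ i, κ i) ℂ :=
  Matrix.of fun g g' => ∏ i, M i (g i) (g' i)

lemma tens_apply (M : ∀ i, Matrix (κ i) (κ i) ℂ) (g g' : ∀ i, κ i) :
    tens M g g' = ∏ i, M i (g i) (g' i) := rfl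

lemma tens_mul (M M' : ∀ i, Matrix (κ i) (κ i) ℂ) :
    tens M * tens M' = tens (fun i => M i * M' i) := by
  ext g g'
  simp only [Matrix.mul_apply, tens_apply, ← Finset.prod_mul_distrib]
  exact (Fintype.prod_sum (fun i j => M i (g i) j * M' i j (g' i))).symm

lemma tens_one : tens (fun i => (1 : Matrix (κ i) (κ i) ℂ)) = 1 := by
  ext g g'
  simp only [tens_apply, Matrix.one_apply]
  rw [show (∏ i, if g i = g' i then (1:ℂ) else 0) = if (∀ i, g i = g' i) then 1 else 0 from
    Fintype.prod_boole]
  simp [funext_iff]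

lemma tens_conjTranspose (M : ∀ i, Matrix (κ i) (κ i) ℂ) :
    (tens M)ᴴ = tens (fun i => (M i)ᴴ) := by
  ext g g'
  simp [tens_apply, conjTranspose_apply, star_prod]

lemma tens_eq_zero (M : ∀ i, Matrix (κ i) (κ i) ℂ) (j : ι) (h : M j = 0) :
    tens M = 0 := by
  ext g g'
  simp only [tens_apply, Matrix.zero_apply]
  exact Finset.prod_eq_zero (Finset.mem_univ j) (by simp [h])

lemma tens_trace (M : ∀ i, Matrix (κ i) (κ i) ℂ) :
    (tens M).trace = ∏ i, (M i).trace := by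
  simp only [Matrix.trace, Matrix.diag, tens_apply]
  exact (Fintype.prod_sum (fun i j => M i j j)).symm

/-- the operator acting as `Q` in slot `j` and the identity elsewhere. -/
noncomputable def slotM (j : ι) (Q : Matrix (κ j) (κ j) ℂ) :
    Matrix (∀ i, κ i) (∀ i, κ i) ℂ :=
  tens (Function.update (fun i => (1 : Matrix (κ i) (κ i) ℂ)) j Q)

lemma slotM_apply (j : ι) (Q : Matrix (κ j) (κ j) ℂ) (g g' : ∀ i, κ i) :
    slotM j Q g g' = (if ∀ i, i ≠ j → g i = g' i then 1 else 0) * Q (g j) (g' j) := by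
  rw [slotM, tens_apply, ← Finset.prod_erase_mul _ _ (Finset.mem_univ j)]
  congr 1
  · rw [show (∏ i ∈ Finset.univ.erase j,
        (Function.update (fun i => (1 : Matrix (κ i) (κ i) ℂ)) j Q) i (g i) (g' i))
      = ∏ i ∈ Finset.univ.erase j, if g i = g' i then (1:ℂ) else 0 from
        Finset.prod_congr rfl fun i hi => by
          rw [Function.update_of_ne (Finset.ne_of_mem_erase hi)]; rfl]
    rw [Finset.prod_boole]
    simp
  · rw [Function.update_self]

lemma slotM_mul_slotM (j : ι) (A B : Matrix (κ j) (κ j) ℂ) :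
    slotM j A * slotM j B = slotM j (A * B) := by
  rw [slotM, slotM, slotM, tens_mul]
  have : (fun i => Function.update (fun i => (1 : Matrix (κ i) (κ i) ℂ)) j A i *
      Function.update (fun i => (1 : Matrix (κ i) (κ i) ℂ)) j B i)
      = Function.update (fun i => (1 : Matrix (κ i) (κ i) ℂ)) j (A * B) := by
    funext i
    by_cases h : i = j
    · subst h; simp
    · simp [Function.update_of_ne h]
  rw [this]

lemma slotM_conjTranspose (j : ι) (Q : Matrix (κ j) (κ j) ℂ) :
    (slotM j Q)ᴴ = slotM j Qᴴ := by
  rw [slotM, slotM, tens_conjTranspose]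
  have : (fun i => (Function.update (fun i => (1 : Matrix (κ i) (κ i) ℂ)) j Q i)ᴴ)
      = Function.update (fun i => (1 : Matrix (κ i) (κ i) ℂ)) j Qᴴ := by
    funext i
    by_cases h : i = j
    · subst h; simp
    · simp [Function.update_of_ne h]
  rw [this]

lemma slotM_one (j : ι) : slotM j (1 : Matrix (κ j) (κ j) ℂ) = 1 := by
  rw [slotM, show Function.update (fun i => (1 : Matrix (κ i) (κ i) ℂ)) j 1
      = fun i => 1 from ?_, tens_one]
  funext i
  by_cases h : i = j
  · subst h; simp
  · simp [Function.update_of_ne h]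

lemma slotM_sub (j : ι) (A B : Matrix (κ j) (κ j) ℂ) :
    slotM j (A - B) = slotM j A - slotM j B := by
  ext g g'
  simp [slotM_apply, Matrix.sub_apply, mul_sub]

end Stm14

namespace Stm14

variable {n : Type*} [Fintype n] [DecidableEq n]

lemma sum_mulVec' {ι : Type*} (s : Finset ι) (P : ι → Matrix n n ℂ) (x : n → ℂ) :
    (∑ i ∈ s, P i).mulVec x = ∑ i ∈ s, (P i).mulVec x := by
  funext k
  simp [Matrix.mulVec, dotProduct, Matrix.sum_apply, Finset.sum_mul]
  rw [Finset.sum_comm]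

lemma dot_star_self (v : n → ℂ) :
    star v ⬝ᵥ v = ((∑ k, Complex.normSq (v k) : ℝ) : ℂ) := by
  simp only [dotProduct, Pi.star_apply, Complex.ofReal_sum]
  refine Finset.sum_congr rfl fun k _ => ?_
  rw [Complex.star_def, mul_comm, Complex.mul_conj]

lemma ker_sum_proj {ι : Type*} [Fintype ι] (P : ι → Matrix n n ℂ)
    (hherm : ∀ i, (P i).IsHermitian) (hidem : ∀ i, P i * P i = P i) :
    LinearMap.ker (∑ i, P i).mulVecLin = ⨅ i, LinearMap.ker (P i).mulVecLin := by
  apply le_antisymm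
  · intro x hx
    simp only [LinearMap.mem_ker, Matrix.mulVecLin_apply] at hx
    have h2 : ∀ i, star x ⬝ᵥ (P i).mulVec x
        = star ((P i).mulVec x) ⬝ᵥ ((P i).mulVec x) := by
      intro i
      symm
      rw [Matrix.star_mulVec, ← Matrix.dotProduct_mulVec, Matrix.mulVec_mulVec,
        (hherm i).eq, hidem i]
    have h1 : ∑ i, star x ⬝ᵥ (P i).mulVec x = 0 := by
      have hsw : ∑ i, star x ⬝ᵥ (P i).mulVec x = star x ⬝ᵥ ((∑ i, P i).mulVec x) := by
        rw [sum_mulVec']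
        simp only [dotProduct, Finset.sum_apply, Finset.mul_sum]
        rw [Finset.sum_comm]
      rw [hsw, hx, dotProduct_zero]
    rw [Finset.sum_congr rfl fun i _ => (h2 i).trans (dot_star_self _)] at h1
    rw [← Complex.ofReal_sum, Complex.ofReal_eq_zero] at h1
    have hz : ∀ i ∈ Finset.univ, (∑ k, Complex.normSq ((P i).mulVec x k)) = 0 :=
      (Finset.sum_eq_zero_iff_of_nonneg fun i _ =>
        Finset.sum_nonneg fun k _ => Complex.normSq_nonneg _).mp h1
    have key : ∀ i, (P i).mulVec x = 0 := by
      intro i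
      funext k
      have := (Finset.sum_eq_zero_iff_of_nonneg fun k _ =>
        Complex.normSq_nonneg ((P i).mulVec x k)).mp (hz i (Finset.mem_univ i)) k
        (Finset.mem_univ k)
      simpa [Complex.normSq_eq_zero] using this
    exact Submodule.mem_iInf _ |>.mpr fun i => by
      simp [LinearMap.mem_ker, Matrix.mulVecLin_apply, key i]
  · intro x hx
    have := Submodule.mem_iInf _ |>.mp hx
    simp only [LinearMap.mem_ker, Matrix.mulVecLin_apply] at this ⊢
    rw [sum_mulVec']
    exact Finset.sum_eq_zero fun i _ => this i

lemma trace_mulVecLin (M : Matrix n n ℂ) :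
    LinearMap.trace ℂ (n → ℂ) M.mulVecLin = M.trace := by
  rw [LinearMap.trace_eq_matrix_trace ℂ (Pi.basisFun ℂ n),
    LinearMap.toMatrix_eq_toMatrix', ← Matrix.toLin'_apply' M, LinearMap.toMatrix'_toLin']

lemma isProj_range (M : Matrix n n ℂ) (hidem : M * M = M) :
    LinearMap.IsProj (LinearMap.range M.mulVecLin) M.mulVecLin := by
  constructor
  · intro x; exact LinearMap.mem_range_self _ x
  · rintro x ⟨y, rfl⟩
    have := congrArg (fun A => Matrix.mulVecLin A y) hidem
    simpa [Matrix.mulVecLin_mul] using this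

lemma trace_eq_finrank_range (M : Matrix n n ℂ) (hidem : M * M = M) :
    M.trace = (Module.finrank ℂ (LinearMap.range M.mulVecLin) : ℂ) := by
  rw [← trace_mulVecLin]
  exact (isProj_range M hidem).trace

lemma trace_one_sub_eq_finrank_ker (M : Matrix n n ℂ) (hidem : M * M = M) :
    (1 - M).trace = (Module.finrank ℂ (LinearMap.ker M.mulVecLin) : ℂ) := by
  have hrn := LinearMap.finrank_range_add_finrank_ker M.mulVecLin
  have hdom : Module.finrank ℂ (n → ℂ) = Fintype.card n :=
    Module.finrank_fintype_fun_eq_card ℂ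
  rw [Matrix.trace_sub, Matrix.trace_one, trace_eq_finrank_range M hidem]
  rw [hdom] at hrn
  have : (Fintype.card n : ℂ)
      = (Module.finrank ℂ (LinearMap.range M.mulVecLin) : ℂ)
        + (Module.finrank ℂ (LinearMap.ker M.mulVecLin) : ℂ) := by
    rw [← Complex.ofReal_natCast]
    push_cast [← hrn]
    ring
  rw [this]; ring

end Stm14

namespace Stm14

variable {ι : Type*} [Fintype ι] [DecidableEq ι] {κ : ι → Type*}
  [∀ i, Fintype (κ i)] [∀ i, DecidableEq (κ i)]

theorem finrank_iInf_ker_slotM (Qf : ∀ i, Matrix (κ i) (κ i) ℂ)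
    (hidem : ∀ i, Qf i * Qf i = Qf i) :
    Module.finrank ℂ ↥(⨅ i, LinearMap.ker (slotM i (Qf i)).mulVecLin)
      = ∏ i, Module.finrank ℂ ↥(LinearMap.ker (Qf i).mulVecLin) := by
  set P : Matrix (∀ i, κ i) (∀ i, κ i) ℂ := tens (fun i => 1 - Qf i) with hP
  have hPidem : P * P = P := by
    rw [hP, tens_mul]
    have : (fun i => (1 - Qf i) * (1 - Qf i)) = fun i => 1 - Qf i := by
      funext i
      rw [sub_mul, mul_sub, mul_sub, mul_one, one_mul, mul_one, hidem i]
      abel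
    rw [this]
  have hslotP : ∀ j, slotM j (Qf j) * P = 0 := by
    intro j
    rw [slotM, hP, tens_mul]
    refine tens_eq_zero _ j ?_
    rw [Function.update_self, mul_sub, mul_one, hidem j, sub_self]
  have hrange : LinearMap.range P.mulVecLin
      = ⨅ i, LinearMap.ker (slotM i (Qf i)).mulVecLin := by
    apply le_antisymm
    · rintro _ ⟨y, rfl⟩
      rw [Submodule.mem_iInf]
      intro i
      simp only [LinearMap.mem_ker, Matrix.mulVecLin_apply, Matrix.mulVec_mulVec,
        hslotP i, Matrix.zero_mulVec]
    · intro x hx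
      have hx' : ∀ i, (slotM i (Qf i)).mulVec x = 0 := by
        intro i
        have := (Submodule.mem_iInf _).mp hx i
        simpa [LinearMap.mem_ker, Matrix.mulVecLin_apply] using this
      have key : ∀ S : Finset ι,
          (tens (fun i => if i ∈ S then 1 - Qf i else 1)).mulVec x = x := by
        intro S
        induction S using Finset.induction_on with
        | empty => simp [tens_one, Matrix.one_mulVec]
        | @insert j S hj ih =>
          have hsplit : (fun i => if i ∈ insert j S then 1 - Qf i else 1)
              = fun i => (if i ∈ S then 1 - Qf i else 1) *
                  (Function.update (fun i => (1 : Matrix (κ i) (κ i) ℂ)) j (1 - Qf j)) i := by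
            funext i
            by_cases h : i = j
            · subst h
              simp [hj]
            · rw [Function.update_of_ne h, mul_one]
              simp [Finset.mem_insert, h]
          rw [hsplit, ← tens_mul, ← Matrix.mulVec_mulVec]
          have : (tens (Function.update (fun i => (1 : Matrix (κ i) (κ i) ℂ)) j
              (1 - Qf j))).mulVec x = x := by
            rw [← slotM, slotM_sub, slotM_one, Matrix.sub_mulVec, Matrix.one_mulVec,
              hx' j, sub_zero]
          rw [this, ih]
      have := key Finset.univ
      simp only [Finset.mem_univ, if_true] at this
      exact ⟨x, by simpa [Matrix.mulVecLin_apply, hP] using this⟩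
  have htr : P.trace = ((∏ i, Module.finrank ℂ ↥(LinearMap.ker (Qf i).mulVecLin) : ℕ) : ℂ) := by
    rw [hP, tens_trace, Nat.cast_prod]
    exact Finset.prod_congr rfl fun i _ => trace_one_sub_eq_finrank_ker (Qf i) (hidem i)
  have htr2 : P.trace = (Module.finrank ℂ ↥(LinearMap.range P.mulVecLin) : ℂ) :=
    trace_eq_finrank_range P hPidem
  have : (Module.finrank ℂ ↥(LinearMap.range P.mulVecLin) : ℂ)
      = ((∏ i, Module.finrank ℂ ↥(LinearMap.ker (Qf i).mulVecLin) : ℕ) : ℂ) := by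
    rw [← htr2, htr]
  rw [← hrange]
  exact_mod_cast this

end Stm14

namespace Stm14

section Block

variable {A : Type*} [Fintype A] [DecidableEq A] {G : A → Type*}
  [∀ a, Fintype (G a)] [∀ a, DecidableEq (G a)]

lemma blockDiagonal'_mulVec (B : ∀ a, Matrix (G a) (G a) ℂ) (v : (Σ a, G a) → ℂ)
    (a : A) (i : G a) :
    (Matrix.blockDiagonal' B).mulVec v ⟨a, i⟩ = (B a).mulVec (fun k => v ⟨a, k⟩) i := by
  rw [Matrix.mulVec, dotProduct, ← Finset.univ_sigma_univ, Finset.sum_sigma]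
  rw [Finset.sum_eq_single a (fun b _ hb => ?_) (by simp)]
  · simp only [Matrix.blockDiagonal'_apply']
    rw [Matrix.mulVec, dotProduct]
    refine Finset.sum_congr rfl fun k _ => ?_
    rw [dif_pos trivial]
    congr 1
  · refine Finset.sum_eq_zero fun k _ => ?_
    rw [Matrix.blockDiagonal'_apply', dif_neg (by exact hb ∘ Eq.symm ∘ id), zero_mul]

/-- the kernel of a dependent block-diagonal matrix decomposes as a product. -/
noncomputable def kerBlockEquiv (B : ∀ a, Matrix (G a) (G a) ℂ) :
    LinearMap.ker (Matrix.blockDiagonal' B).mulVecLin ≃ₗ[ℂ]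
      ∀ a, LinearMap.ker (B a).mulVecLin where
  toFun v := fun a => ⟨fun k => v.1 ⟨a, k⟩, by
    have := v.2
    simp only [LinearMap.mem_ker, Matrix.mulVecLin_apply] at this ⊢
    funext i
    rw [← blockDiagonal'_mulVec B v.1 a i, this]
    rfl⟩
  map_add' u v := rfl
  map_smul' c v := rfl
  invFun w := ⟨fun p => (w p.1).1 p.2, by
    simp only [LinearMap.mem_ker, Matrix.mulVecLin_apply]
    funext p
    obtain ⟨a, i⟩ := p
    rw [blockDiagonal'_mulVec]
    have := (w a).2
    simp only [LinearMap.mem_ker, Matrix.mulVecLin_apply] at this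
    rw [show (fun k => (w a).1 k) = (w a).1 from rfl, this]
    rfl⟩
  left_inv v := by
    apply Subtype.ext
    funext p
    obtain ⟨a, i⟩ := p
    rfl
  right_inv w := by
    funext a
    apply Subtype.ext
    rfl

lemma finrank_ker_blockDiagonal' (B : ∀ a, Matrix (G a) (G a) ℂ) :
    Module.finrank ℂ ↥(LinearMap.ker (Matrix.blockDiagonal' B).mulVecLin)
      = ∑ a, Module.finrank ℂ ↥(LinearMap.ker (B a).mulVecLin) := by
  rw [(kerBlockEquiv B).finrank_eq, Module.finrank_pi_fintype]

end Block

section Reindex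

variable {m l : Type*} [Fintype m] [DecidableEq m] [Fintype l] [DecidableEq l]

lemma finrank_ker_reindex (e : m ≃ l) (M : Matrix m m ℂ) :
    Module.finrank ℂ ↥(LinearMap.ker ((Matrix.reindex e e) M).mulVecLin)
      = Module.finrank ℂ ↥(LinearMap.ker M.mulVecLin) := by
  rw [Matrix.mulVecLin_reindex, LinearMap.ker_comp,
    show LinearMap.ker ((LinearEquiv.funCongrLeft ℂ ℂ e.symm : (m → ℂ) ≃ₗ[ℂ] (l → ℂ)) :
      (m → ℂ) →ₗ[ℂ] (l → ℂ)) = ⊥ from LinearMap.ker_eq_bot_of_injective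
      (LinearEquiv.funCongrLeft ℂ ℂ e.symm).injective,
    Submodule.comap_bot, LinearMap.ker_comp, Submodule.comap_equiv_eq_map_symm]
  exact LinearEquiv.finrank_map_eq _ _

end Reindex

end Stm14

namespace Stm14

section Specific

variable {V : Type*} [Fintype V] [DecidableEq V] (dl dr : V → ℕ) (N : ℕ) [NeZero N]

lemma castL_refl {α : V} (h : α = α) (i : Fin (dl α)) : castL dl h i = i :=
  cast_eq_iff_heq.mpr HEq.rfl

lemma castR_refl {α : V} (h : α = α) (i : Fin (dr α)) : castR dr h i = i :=
  cast_eq_iff_heq.mpr HEq.rfl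

lemma castL_cancel {α β : V} {h1 h2 : α = β} {u v : Fin (dl β)}
    (huv : castL dl h1 u = castL dl h2 v) : u = v := by
  subst h1
  rwa [castL_refl, castL_refl] at huv

lemma castL_congr {α β : V} {h1 h2 : α = β} {u v : Fin (dl β)} (huv : u = v) :
    castL dl h1 u = castL dl h2 v := by
  subst h1
  rw [castL_refl, castL_refl, huv]

lemma site_mk_inj {α : V} {p q : Fin (dl α) × Fin (dr α)}
    (h : (⟨α, p⟩ : Site V dl dr) = ⟨α, q⟩) : p = q := by
  have h' : (⟨α, p⟩ : Σ α : V, Fin (dl α) × Fin (dr α)) = ⟨α, q⟩ := h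
  injection h'

/-- regrouping map: from site functions to block configuration plus bond factors. -/
def toSig (x : ZMod N → Site V dl dr) :
    Σ a : ZMod N → V, ∀ j : ZMod N, Fin (dr (a j)) × Fin (dl (a (j + 1))) :=
  ⟨fun j => (x j).1, fun j => ((x j).2.2, (x (j + 1)).2.1)⟩

/-- inverse regrouping map. -/
def ofSig (p : Σ a : ZMod N → V, ∀ j : ZMod N, Fin (dr (a j)) × Fin (dl (a (j + 1)))) :
    ZMod N → Site V dl dr :=
  fun j => ⟨p.1 j, (castL dl (congrArg p.1 (sub_add_cancel j 1).symm) (p.2 (j - 1)).2,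
    (p.2 j).1)⟩

lemma ofSig_fst (p : Σ a : ZMod N → V, ∀ j : ZMod N, Fin (dr (a j)) × Fin (dl (a (j + 1))))
    (j : ZMod N) : (ofSig dl dr N p j).1 = p.1 j := rfl

lemma ofSig_snd_fst (p : Σ a : ZMod N → V, ∀ j : ZMod N, Fin (dr (a j)) × Fin (dl (a (j + 1))))
    (j : ZMod N) : (ofSig dl dr N p j).2.1
      = castL dl (congrArg p.1 (sub_add_cancel j 1).symm) (p.2 (j - 1)).2 := rfl

lemma ofSig_snd_snd (p : Σ a : ZMod N → V, ∀ j : ZMod N, Fin (dr (a j)) × Fin (dl (a (j + 1))))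
    (j : ZMod N) : (ofSig dl dr N p j).2.2 = (p.2 j).1 := rfl

lemma castL_shift {a : ZMod N → V} (g : ∀ j : ZMod N, Fin (dr (a j)) × Fin (dl (a (j + 1))))
    {i i' : ZMod N} (hii : i = i') (pf : a (i' + 1) = a (i + 1)) :
    castL dl pf (g i).2 = (g i').2 := by
  subst hii
  exact castL_refl dl pf _

lemma snd_shift {a : ZMod N → V} (g g' : ∀ j : ZMod N, Fin (dr (a j)) × Fin (dl (a (j + 1))))
    {i i' : ZMod N} (hii : i = i') (h : (g i).2 = (g' i).2) : (g i').2 = (g' i').2 := by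
  subst hii
  exact h

lemma xcastL {x : ZMod N → Site V dl dr} {i i' : ZMod N} (hii : i = i')
    (pf : (x i').1 = (x i).1) : castL dl pf (x i).2.1 = (x i').2.1 := by
  subst hii
  exact castL_refl dl pf _

/-- the regrouping equivalence of index types. -/
def sigEquiv : (ZMod N → Site V dl dr)
    ≃ Σ a : ZMod N → V, ∀ j : ZMod N, Fin (dr (a j)) × Fin (dl (a (j + 1))) where
  toFun := toSig dl dr N
  invFun := ofSig dl dr N
  left_inv x := by
    funext j
    refine Sigma.ext rfl (heq_of_eq ?_)
    refine Prod.ext ?_ rfl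
    exact xcastL dl dr N (sub_add_cancel j 1) (congrArg (fun i => (x i).1) (sub_add_cancel j 1).symm)
  right_inv p := by
    obtain ⟨a, g⟩ := p
    refine Sigma.ext rfl (heq_of_eq ?_)
    funext j
    refine Prod.ext rfl ?_
    exact castL_shift dl dr N g (add_sub_cancel_right j 1)
      (congrArg (fun i => a (i + 1)) (add_sub_cancel_right j 1).symm)

lemma sigEquiv_symm_apply
    (p : Σ a : ZMod N → V, ∀ j : ZMod N, Fin (dr (a j)) × Fin (dl (a (j + 1)))) :
    (sigEquiv dl dr N).symm p = ofSig dl dr N p := rfl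

lemma ite_mul_ite_eq {C1 C3 CR : Prop} [Decidable C1] [Decidable C3] [Decidable CR]
    (h : C1 ∧ C3 ↔ CR) (q q' : ℂ) (hq : C3 → q = q') :
    (if C1 then (1 : ℂ) else 0) * (if C3 then q else 0) = (if CR then 1 else 0) * q' := by
  by_cases h1 : C1 <;> by_cases h3 : C3
  · rw [if_pos h1, if_pos h3, if_pos (h.mp ⟨h1, h3⟩), one_mul, one_mul, hq h3]
  · rw [if_neg h3, if_neg (fun hcr => h3 (h.mpr hcr).2), mul_zero, zero_mul]
  · rw [if_neg h1, if_neg (fun hcr => h1 (h.mpr hcr).1), zero_mul, zero_mul]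
  · rw [if_neg h1, if_neg (fun hcr => h1 (h.mpr hcr).1), zero_mul, zero_mul]

variable (Q : ∀ α β : V, Matrix (Fin (dr α) × Fin (dl β)) (Fin (dr α) × Fin (dl β)) ℂ)

lemma reindex_Pblock (hN : 2 ≤ N) (j : ZMod N) :
    Matrix.reindex (sigEquiv dl dr N) (sigEquiv dl dr N) (Pblock V dl dr Q N j)
      = Matrix.blockDiagonal'
          (fun a : ZMod N → V => slotM j (Q (a j) (a (j + 1)))) := by
  haveI : Fact (1 < N) := ⟨hN⟩
  have h10 : (1 : ZMod N) ≠ 0 := one_ne_zero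
  have hj1 : ∀ i : ZMod N, i + 1 ≠ i := by
    intro i h
    exact h10 (by rwa [add_eq_left] at h)
  have hm1 : ∀ i : ZMod N, i - 1 ≠ i := by
    intro i h
    exact h10 (by rwa [sub_eq_self] at h)
  ext ⟨a, g⟩ ⟨b, g'⟩
  rw [Matrix.reindex_apply, Matrix.submatrix_apply, sigEquiv_symm_apply, sigEquiv_symm_apply]
  by_cases hab : a = b
  · subst hab
    rw [Matrix.blockDiagonal'_apply', dif_pos rfl, slotM_apply]
    rw [show ∀ (h : (∀ j : ZMod N, Fin (dr (a j)) × Fin (dl (a (j + 1))))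
        = (∀ j : ZMod N, Fin (dr (a j)) × Fin (dl (a (j + 1))))), cast h g' = g' from
      fun h => cast_eq_iff_heq.mpr HEq.rfl]
    simp only [Pblock, Matrix.of_apply, ofSig_fst, ofSig_snd_fst, ofSig_snd_snd]
    erw [dif_pos (show (ofSig dl dr N ⟨a, g⟩ j).1 = (ofSig dl dr N ⟨a, g'⟩ j).1 ∧ (ofSig dl dr N ⟨a, g⟩ (j + 1)).1 = (ofSig dl dr N ⟨a, g'⟩ (j + 1)).1 from ⟨rfl, rfl⟩)]
    try simp only [castL_refl, castR_refl]
    rw [castL_shift dl dr N g (add_sub_cancel_right j 1),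
      castL_shift dl dr N g' (add_sub_cancel_right j 1)]
    refine ite_mul_ite_eq ?_ _ _ (fun _ => rfl)
    constructor
    · rintro ⟨h1, h3⟩ i hij
      refine Prod.ext ?_ ?_
      · by_cases hij1 : i = j + 1
        · subst hij1
          exact h3.2
        · have := site_mk_inj dl dr (h1 i hij hij1)
          simp only [Prod.mk.injEq] at this
          exact this.2
      · by_cases hij1 : i = j - 1
        · subst hij1
          exact castL_cancel dl (h3.1.trans (castL_refl dl _ _))
        · have hi1j : i + 1 ≠ j := fun h => hij1 (by rw [← h, add_sub_cancel_right])
          have hi1j1 : i + 1 ≠ j + 1 := fun h => hij (add_right_cancel h)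
          have := site_mk_inj dl dr (h1 (i + 1) hi1j hi1j1)
          simp only [Prod.mk.injEq] at this
          exact snd_shift dl dr N g g' (add_sub_cancel_right i 1) (castL_cancel dl this.1)
    · intro hCR
      refine ⟨?_, ?_, ?_⟩
      · intro i hij hij1
        have hgi : g i = g' i := hCR i hij
        have hgi1 : g (i - 1) = g' (i - 1) :=
          hCR (i - 1) (fun h => hij1 (by rw [← h, sub_add_cancel]))
        refine congrArg (fun z => (⟨a i, z⟩ : Site V dl dr)) ?_
        refine Prod.ext ?_ ?_ <;> dsimp only
        · exact castL_congr dl (congrArg Prod.snd hgi1)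
        · exact congrArg Prod.fst hgi
      · have hc := congrArg Prod.snd (hCR (j - 1) (hm1 j))
        exact (castL_congr dl hc).trans (castL_refl dl _ _).symm
      · exact congrArg Prod.fst (hCR (j + 1) (hj1 j))
  · rw [Matrix.blockDiagonal'_apply', dif_neg hab]
    simp only [Pblock, Matrix.of_apply, ofSig_fst, ofSig_snd_fst, ofSig_snd_snd]
    split_ifs with h1 h2 h3
    · exfalso
      apply hab
      funext i
      by_cases hij : i = j
      · subst hij
        exact h2.1
      · by_cases hij1 : i = j + 1
        · subst hij1
          exact h2.2
        · exact congrArg (fun s : Site V dl dr => s.1) (h1 i hij hij1)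
    · rw [one_mul]; exact dif_neg h2
    · simp
    · simp

end Specific

end Stm14

open scoped Classical in
/-- the ground state degeneracy of the block-diagonal Hamiltonian is
`dim ker H_N = Σ_{(α^1,…,α^N) ∈ C_N} Π_j dim ker Q_{α_r^j, α_l^{j+1}}`, the sum running
over the ordered closed walks of length `N` of the directed graph `G` on `V` with an
edge `α → β` whenever `ker Q_{α_r, β_l} ≠ 0`. -/
theorem stmt_14 (V : Type*) [Fintype V] [DecidableEq V] (dl dr : V → ℕ)
    (Q : ∀ α β : V, Matrix (Fin (dr α) × Fin (dl β)) (Fin (dr α) × Fin (dl β)) ℂ)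
    (hQherm : ∀ α β, (Q α β).IsHermitian)
    (hQidem : ∀ α β, Q α β * Q α β = Q α β)
    (N : ℕ) [NeZero N] (hN : 2 ≤ N) :
    Module.finrank ℂ (LinearMap.ker (Hblock V dl dr Q N).mulVecLin)
      = ∑ a ∈ Finset.univ.filter (fun a : ZMod N → V =>
            ∀ j, LinearMap.ker (Q (a j) (a (j + 1))).mulVecLin ≠ ⊥),
          ∏ j : ZMod N,
            Module.finrank ℂ (LinearMap.ker (Q (a j) (a (j + 1))).mulVecLin) := by
  classical
  have hherm : ∀ (a : ZMod N → V) (i : ZMod N),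
      (Stm14.slotM (κ := fun i' : ZMod N => Fin (dr (a i')) × Fin (dl (a (i' + 1)))) i (Q (a i) (a (i + 1)))).IsHermitian := by
    intro a i
    show (Stm14.slotM (κ := fun i' : ZMod N => Fin (dr (a i')) × Fin (dl (a (i' + 1)))) i (Q (a i) (a (i + 1))))ᴴ = _
    rw [Stm14.slotM_conjTranspose, (hQherm _ _).eq]
  have hidem : ∀ (a : ZMod N → V) (i : ZMod N),
      Stm14.slotM (κ := fun i' : ZMod N => Fin (dr (a i')) × Fin (dl (a (i' + 1)))) i (Q (a i) (a (i + 1))) * Stm14.slotM (κ := fun i' : ZMod N => Fin (dr (a i')) × Fin (dl (a (i' + 1)))) i (Q (a i) (a (i + 1)))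
        = Stm14.slotM (κ := fun i' : ZMod N => Fin (dr (a i')) × Fin (dl (a (i' + 1)))) i (Q (a i) (a (i + 1))) := by
    intro a i
    rw [Stm14.slotM_mul_slotM, hQidem]
  have hH : Matrix.reindex (Stm14.sigEquiv dl dr N) (Stm14.sigEquiv dl dr N)
        (Hblock V dl dr Q N)
      = Matrix.blockDiagonal'
          (fun a : ZMod N → V => ∑ i : ZMod N, Stm14.slotM (κ := fun i' : ZMod N => Fin (dr (a i')) × Fin (dl (a (i' + 1)))) i (Q (a i) (a (i + 1)))) := by
    have hsum : Matrix.reindex (Stm14.sigEquiv dl dr N) (Stm14.sigEquiv dl dr N)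
        (Hblock V dl dr Q N)
        = ∑ j : ZMod N, Matrix.reindex (Stm14.sigEquiv dl dr N) (Stm14.sigEquiv dl dr N)
            (Pblock V dl dr Q N j) := by
      simp only [Hblock]
      ext p q
      simp [Matrix.reindex_apply, Matrix.submatrix_apply, Matrix.sum_apply]
    rw [hsum, Finset.sum_congr rfl (fun i _ => Stm14.reindex_Pblock dl dr N Q hN i)]
    have h2 := map_sum (Matrix.blockDiagonal'AddMonoidHom
      (fun a : ZMod N → V => ∀ i' : ZMod N, Fin (dr (a i')) × Fin (dl (a (i' + 1))))
      (fun a : ZMod N → V => ∀ i' : ZMod N, Fin (dr (a i')) × Fin (dl (a (i' + 1)))) ℂ)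
      (fun i : ZMod N => fun a : ZMod N → V => Stm14.slotM (κ := fun i' : ZMod N => Fin (dr (a i')) × Fin (dl (a (i' + 1)))) i (Q (a i) (a (i + 1)))) Finset.univ
    have h3 : (∑ i : ZMod N, fun a : ZMod N → V => Stm14.slotM (κ := fun i' : ZMod N => Fin (dr (a i')) × Fin (dl (a (i' + 1)))) i (Q (a i) (a (i + 1))))
        = fun a : ZMod N → V => ∑ i : ZMod N, Stm14.slotM (κ := fun i' : ZMod N => Fin (dr (a i')) × Fin (dl (a (i' + 1)))) i (Q (a i) (a (i + 1))) := by
      funext a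
      simp [Finset.sum_apply]
    rw [h3] at h2
    exact h2.symm
  rw [← Stm14.finrank_ker_reindex (Stm14.sigEquiv dl dr N) (Hblock V dl dr Q N), hH,
    Stm14.finrank_ker_blockDiagonal']
  have hterm : ∀ a : ZMod N → V,
      Module.finrank ℂ
          ↥(LinearMap.ker (∑ i : ZMod N, Stm14.slotM (κ := fun i' : ZMod N => Fin (dr (a i')) × Fin (dl (a (i' + 1)))) i (Q (a i) (a (i + 1)))).mulVecLin)
        = ∏ i : ZMod N,
            Module.finrank ℂ ↥(LinearMap.ker (Q (a i) (a (i + 1))).mulVecLin) := by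
    intro a
    rw [Stm14.ker_sum_proj _ (hherm a) (hidem a),
      Stm14.finrank_iInf_ker_slotM _ (fun i => hQidem _ _)]
  rw [Finset.sum_congr rfl fun a _ => hterm a]
  refine (Finset.sum_filter_of_ne ?_).symm
  intro a _ hne j hbot
  apply hne
  refine Finset.prod_eq_zero (Finset.mem_univ j) ?_
  rw [hbot]
  exact finrank_bot ℂ _
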